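/- arXiv:1503.07380 — 2 statements merged into one kernel-verified Lean document; each statement's English description precedes it below -/
import Mathlib

section
/- For every natural number l and every real number a > 0, ∫_{−1}^{1} P_l(x) e^{−a x} dx = 2 (−1)ˡ i_l(a). -/
open Real

/-- Legendre polynomial of degree `l`, via Rodrigues' formula. -/
noncomputable def legendreP (l : ℕ) (x : ℝ) : ℝ :=
  (1 / (2 ^ l * (Nat.factorial l : ℝ))) *
    iteratedDeriv l (fun y : ℝ => (y ^ 2 - 1) ^ l) x

/-- The operator `f ↦ (z ↦ f′(z)/z)` appearing in Rayleigh's formulas. -/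
noncomputable def rayleighOp (f : ℝ → ℝ) : ℝ → ℝ := fun z => deriv f z / z

/-- Modified spherical Bessel function of the first kind. -/
noncomputable def sphI (l : ℕ) (z : ℝ) : ℝ :=
  z ^ l * (rayleighOp^[l] fun w => Real.sinh w / w) z


open Polynomial MeasureTheory intervalIntegral

noncomputable def Qpoly (l : ℕ) : ℝ[X] := (X ^ 2 - 1) ^ l

lemma iteratedDeriv_polyeval (p : ℝ[X]) (k : ℕ) :
    iteratedDeriv k (fun y : ℝ => p.eval y) = fun y => (derivative^[k] p).eval y := by
  induction k with
  | zero => simp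
  | succ k ih =>
    rw [iteratedDeriv_succ, ih, Function.iterate_succ_apply']
    funext y
    exact Polynomial.deriv (p := derivative^[k] p)

lemma Qpoly_eval (l : ℕ) (x : ℝ) : (Qpoly l).eval x = (x ^ 2 - 1) ^ l := by
  simp [Qpoly]

lemma eval_iterate_deriv_Q_zero {l k : ℕ} (hk : k < l) {x : ℝ} (hx : x ^ 2 = 1) :
    (derivative^[k] (Qpoly l)).eval x = 0 := by
  obtain ⟨q, hq⟩ := pow_sub_dvd_iterate_derivative_pow (X ^ 2 - 1 : ℝ[X]) l k
  rw [Qpoly, hq]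
  have h1 : l - k ≠ 0 := by omega
  simp [hx, zero_pow h1]

lemma intInt_polyexp (p : ℝ[X]) (a : ℝ) :
    IntervalIntegrable (fun x => p.eval x * Real.exp (-a * x)) volume (-1) 1 :=
  ((p.continuous_aeval).mul ((continuous_const.mul continuous_id).rexp)).intervalIntegrable _ _

lemma ibp_step (l m : ℕ) (hm : m < l) (a : ℝ) :
    ∫ x in (-1:ℝ)..1, (derivative^[m+1] (Qpoly l)).eval x * Real.exp (-a * x)
      = a * ∫ x in (-1:ℝ)..1, (derivative^[m] (Qpoly l)).eval x * Real.exp (-a * x) := by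
  have hu : ∀ x ∈ Set.uIcc (-1:ℝ) 1, HasDerivAt (fun x => Real.exp (-a * x))
      (-a * Real.exp (-a * x)) x := by
    intro x _
    simpa [mul_comm] using ((hasDerivAt_mul_const (-a)).comp x (hasDerivAt_id x)).exp
  have hv : ∀ x ∈ Set.uIcc (-1:ℝ) 1, HasDerivAt (fun x => (derivative^[m] (Qpoly l)).eval x)
      ((derivative^[m+1] (Qpoly l)).eval x) x := by
    intro x _
    rw [Function.iterate_succ_apply']
    exact (derivative^[m] (Qpoly l)).hasDerivAt x
  have hu' : IntervalIntegrable (fun x => -a * Real.exp (-a * x)) volume (-1) 1 :=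
    (continuous_const.mul ((continuous_const.mul continuous_id).rexp)).intervalIntegrable _ _
  have hv' : IntervalIntegrable (fun x => (derivative^[m+1] (Qpoly l)).eval x) volume (-1) 1 :=
    ((derivative^[m+1] (Qpoly l)).continuous_aeval).intervalIntegrable _ _
  have H := integral_mul_deriv_eq_deriv_mul hu hv hu' hv'
  have e1 : (derivative^[m] (Qpoly l)).eval (1:ℝ) = 0 :=
    eval_iterate_deriv_Q_zero hm (by norm_num)
  have e2 : (derivative^[m] (Qpoly l)).eval (-1:ℝ) = 0 :=
    eval_iterate_deriv_Q_zero hm (by norm_num)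
  rw [e1, e2] at H
  calc ∫ x in (-1:ℝ)..1, (derivative^[m+1] (Qpoly l)).eval x * Real.exp (-a * x)
      = ∫ x in (-1:ℝ)..1, Real.exp (-a * x) * (derivative^[m+1] (Qpoly l)).eval x := by
        simp [mul_comm]
    _ = - ∫ x in (-1:ℝ)..1, (-a * Real.exp (-a * x)) * (derivative^[m] (Qpoly l)).eval x := by
        rw [H]; ring
    _ = a * ∫ x in (-1:ℝ)..1, (derivative^[m] (Qpoly l)).eval x * Real.exp (-a * x) := by
        rw [← intervalIntegral.integral_const_mul]
        rw [← intervalIntegral.integral_neg]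
        congr 1; funext x; ring

lemma ibp_iter (l : ℕ) (a : ℝ) : ∀ k ≤ l,
    (∫ x in (-1:ℝ)..1, (derivative^[k] (Qpoly l)).eval x * Real.exp (-a * x))
      = a ^ k * ∫ x in (-1:ℝ)..1, (Qpoly l).eval x * Real.exp (-a * x) := by
  intro k
  induction k with
  | zero => simp
  | succ k ih =>
    intro hk
    rw [ibp_step l k (by omega) a, ih (by omega)]
    ring

noncomputable def Jint (l : ℕ) (z : ℝ) : ℝ :=
  ∫ x in (-1:ℝ)..1, (1 - x ^ 2) ^ l * Real.exp (z * x)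

lemma contJ (l : ℕ) (z : ℝ) :
    Continuous (fun x : ℝ => (1 - x ^ 2) ^ l * Real.exp (z * x)) := by
  fun_prop

lemma contJ' (l : ℕ) (z : ℝ) :
    Continuous (fun x : ℝ => (1 - x ^ 2) ^ l * (Real.exp (z * x) * x)) := by
  fun_prop

lemma hasDerivAt_J (l : ℕ) (z : ℝ) :
    HasDerivAt (Jint l) (∫ x in (-1:ℝ)..1, (1 - x ^ 2) ^ l * (Real.exp (z * x) * x)) z := by
  have H := intervalIntegral.hasDerivAt_integral_of_dominated_loc_of_deriv_le
    (F := fun (w : ℝ) (x : ℝ) => (1 - x ^ 2) ^ l * Real.exp (w * x))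
    (F' := fun (w : ℝ) (x : ℝ) => (1 - x ^ 2) ^ l * (Real.exp (w * x) * x))
    (x₀ := z) (a := (-1:ℝ)) (b := 1) (μ := volume)
    (bound := fun _ => Real.exp (|z| + 1)) (s := Metric.ball z 1) (Metric.ball_mem_nhds z one_pos)
    ?_ ?_ ?_ ?_ ?_ ?_
  · exact H.2
  · filter_upwards with w
    exact ((contJ l w).aestronglyMeasurable).restrict
  · exact (contJ l z).intervalIntegrable _ _
  · exact ((contJ' l z).aestronglyMeasurable).restrict
  · filter_upwards with x hx w hw
    have hx' : x ∈ Set.Ioc (-1:ℝ) 1 := by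
      rwa [Set.uIoc_of_le (by norm_num : (-1:ℝ) ≤ 1)] at hx
    have hx1 : |x| ≤ 1 := abs_le.2 ⟨le_of_lt hx'.1, hx'.2⟩
    have hx2 : (0:ℝ) ≤ 1 - x ^ 2 := by nlinarith [sq_abs x, abs_nonneg x]
    have hx3 : (1 - x ^ 2 : ℝ) ≤ 1 := by nlinarith [sq_nonneg x]
    have hw' : |w| ≤ |z| + 1 := by
      have := mem_ball_iff_norm.1 hw
      calc |w| = |z + (w - z)| := by ring_nf
        _ ≤ |z| + |w - z| := abs_add_le _ _
        _ ≤ |z| + 1 := by simpa [Real.norm_eq_abs] using le_of_lt (by simpa [Real.norm_eq_abs] using this)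
    have hb : |(1 - x ^ 2) ^ l * (Real.exp (w * x) * x)| ≤ Real.exp (|z| + 1) := by
      rw [abs_mul, abs_mul]
      have h1 : |(1 - x ^ 2) ^ l| ≤ 1 := by
        rw [abs_pow]
        exact pow_le_one₀ (abs_nonneg _) (by rwa [abs_of_nonneg hx2])
      have h2 : |Real.exp (w * x)| ≤ Real.exp (|z| + 1) := by
        rw [abs_of_pos (Real.exp_pos _)]
        apply Real.exp_le_exp.2
        calc w * x ≤ |w * x| := le_abs_self _
          _ = |w| * |x| := abs_mul _ _
          _ ≤ (|z| + 1) * 1 := by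
              exact mul_le_mul hw' hx1 (abs_nonneg _) (by positivity)
          _ = |z| + 1 := mul_one _
      calc |(1 - x ^ 2) ^ l| * (|Real.exp (w * x)| * |x|)
          ≤ 1 * (Real.exp (|z| + 1) * 1) := by
            apply mul_le_mul h1 _ (by positivity) (by norm_num)
            exact mul_le_mul h2 hx1 (abs_nonneg _) (by positivity)
        _ = Real.exp (|z| + 1) := by ring
    rw [Real.norm_eq_abs]; exact hb
  · exact (continuous_const).intervalIntegrable _ _
  · filter_upwards with x hx w hw
    have h : HasDerivAt (fun w : ℝ => Real.exp (w * x)) (Real.exp (w * x) * x) w :=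
      (hasDerivAt_mul_const x).exp
    exact h.const_mul _

lemma ibp2 (l : ℕ) (z : ℝ) :
    (∫ x in (-1:ℝ)..1, (1 - x ^ 2) ^ l * (Real.exp (z * x) * x))
      = z / (2 * (l + 1)) * Jint (l + 1) z := by
  have hu : ∀ x ∈ Set.uIcc (-1:ℝ) 1, HasDerivAt (fun x => Real.exp (z * x))
      (z * Real.exp (z * x)) x := by
    intro x _
    simpa [mul_comm] using ((hasDerivAt_mul_const z).comp x (hasDerivAt_id x)).exp
  have hv : ∀ x ∈ Set.uIcc (-1:ℝ) 1,
      HasDerivAt (fun x : ℝ => -(1 - x ^ 2) ^ (l + 1) / (2 * (l + 1)))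
        (x * (1 - x ^ 2) ^ l) x := by
    intro x _
    have h1 : HasDerivAt (fun x : ℝ => (1 - x ^ 2)) (-(2 * x)) x := by
      simpa using (hasDerivAt_pow 2 x).const_sub 1
    have h2 := (h1.pow (l + 1)).neg.div_const (2 * ((l : ℝ) + 1))
    refine h2.congr_deriv ?_
    have : ((l:ℝ) + 1) ≠ 0 := by positivity
    rw [Nat.add_sub_cancel]
    push_cast
    field_simp
  have hu' : IntervalIntegrable (fun x => z * Real.exp (z * x)) volume (-1) 1 := by
    apply Continuous.intervalIntegrable; fun_prop
  have hv' : IntervalIntegrable (fun x : ℝ => x * (1 - x ^ 2) ^ l) volume (-1) 1 := by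
    apply Continuous.intervalIntegrable; fun_prop
  have H := integral_mul_deriv_eq_deriv_mul hu hv hu' hv'
  simp only [show ((1:ℝ) - 1 ^ 2) = 0 by norm_num,
    show ((1:ℝ) - (-1) ^ 2) = 0 by norm_num, zero_pow (Nat.succ_ne_zero l),
    neg_zero, zero_div, mul_zero] at H
  calc (∫ x in (-1:ℝ)..1, (1 - x ^ 2) ^ l * (Real.exp (z * x) * x))
      = ∫ x in (-1:ℝ)..1, Real.exp (z * x) * (x * (1 - x ^ 2) ^ l) := by
        congr 1; funext x; ring
    _ = - ∫ x in (-1:ℝ)..1, z * Real.exp (z * x) * (-(1 - x ^ 2) ^ (l + 1) / (2 * (l + 1))) := by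
        rw [H]; ring
    _ = z / (2 * (l + 1)) * Jint (l + 1) z := by
        rw [Jint, ← intervalIntegral.integral_const_mul, ← intervalIntegral.integral_neg]
        congr 1; funext x; ring

lemma J_zero (z : ℝ) (hz : z ≠ 0) : Jint 0 z = 2 * Real.sinh z / z := by
  have h : ∀ x ∈ Set.uIcc (-1:ℝ) 1, HasDerivAt (fun x => Real.exp (z * x) / z)
      (Real.exp (z * x)) x := by
    intro x _
    have : HasDerivAt (fun x => Real.exp (z * x)) (z * Real.exp (z * x)) x := by
      simpa [mul_comm] using ((hasDerivAt_mul_const z).comp x (hasDerivAt_id x)).exp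
    have h2 := this.div_const z
    refine h2.congr_deriv ?_
    field_simp
  have hint : IntervalIntegrable (fun x => Real.exp (z * x)) volume (-1) 1 := by
    apply Continuous.intervalIntegrable; fun_prop
  have := intervalIntegral.integral_eq_sub_of_hasDerivAt h hint
  rw [Jint]
  simp only [pow_zero, one_mul]
  rw [this, Real.sinh_eq]
  field_simp

lemma rayleigh_eq (l : ℕ) : ∀ z : ℝ, z ≠ 0 →
    (rayleighOp^[l] fun w => Real.sinh w / w) z
      = Jint l z / (2 ^ (l + 1) * (Nat.factorial l : ℝ)) := by
  induction l with
  | zero =>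
    intro z hz
    simp only [Function.iterate_zero, id_eq, pow_one, Nat.factorial_zero, Nat.cast_one, mul_one]
    rw [J_zero z hz]
    ring
  | succ l ih =>
    intro z hz
    rw [Function.iterate_succ_apply', rayleighOp]
    have hev : (rayleighOp^[l] fun w => Real.sinh w / w)
        =ᶠ[nhds z] (fun w => Jint l w / (2 ^ (l + 1) * (Nat.factorial l : ℝ))) := by
      filter_upwards [IsOpen.mem_nhds isOpen_compl_singleton
        (Set.mem_compl_singleton_iff.2 hz)] with w hw
      exact ih w hw
    rw [hev.deriv_eq]
    have hd : HasDerivAt (fun w => Jint l w / (2 ^ (l + 1) * (Nat.factorial l : ℝ)))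
        ((z / (2 * (l + 1)) * Jint (l + 1) z) / (2 ^ (l + 1) * (Nat.factorial l : ℝ))) z := by
      have := (hasDerivAt_J l z).div_const (2 ^ (l + 1) * (Nat.factorial l : ℝ))
      rwa [ibp2 l z] at this
    rw [hd.deriv]
    have h1 : ((l:ℝ) + 1) ≠ 0 := by positivity
    have h2 : (Nat.factorial l : ℝ) ≠ 0 := Nat.cast_ne_zero.2 (Nat.factorial_ne_zero l)
    rw [Nat.factorial_succ]
    push_cast
    field_simp
    ring

lemma J_even (l : ℕ) (a : ℝ) : Jint l (-a) = Jint l a := by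
  have := intervalIntegral.integral_comp_neg
    (a := (-1:ℝ)) (b := 1) (f := fun x => (1 - x ^ 2) ^ l * Real.exp (a * x))
  simp only [neg_neg] at this
  rw [Jint, Jint, ← this]
  congr 1; funext x; ring_nf

/-- `∫_{-1}^{1} P_l(x) e^{-a x} dx = 2 (-1)ˡ i_l(a)` for `a > 0`. -/
theorem legendre_exp_integral (l : ℕ) (a : ℝ) (ha : 0 < a) :
    ∫ x in (-1 : ℝ)..1, legendreP l x * Real.exp (-a * x) =
      2 * (-1) ^ l * sphI l a := by
  have key : (∫ x in (-1:ℝ)..1, legendreP l x * Real.exp (-a * x))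
      = (1 / (2 ^ l * (Nat.factorial l : ℝ))) *
        ∫ x in (-1:ℝ)..1, (derivative^[l] (Qpoly l)).eval x * Real.exp (-a * x) := by
    rw [← intervalIntegral.integral_const_mul]
    congr 1; funext x
    rw [legendreP]
    have : (fun y : ℝ => (y ^ 2 - 1) ^ l) = fun y : ℝ => (Qpoly l).eval y := by
      funext y; rw [Qpoly_eval]
    rw [this, iteratedDeriv_polyeval]
    ring
  rw [key, ibp_iter l a l le_rfl]
  have hQ : (∫ x in (-1:ℝ)..1, (Qpoly l).eval x * Real.exp (-a * x))
      = (-1) ^ l * Jint l a := by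
    rw [← J_even l a, Jint, ← intervalIntegral.integral_const_mul]
    congr 1; funext x
    rw [Qpoly_eval]
    have : (x ^ 2 - 1 : ℝ) ^ l = (-1) ^ l * (1 - x ^ 2) ^ l := by
      rw [← neg_pow]; ring_nf
    rw [this]
    ring_nf
  rw [hQ, sphI, rayleigh_eq l a (ne_of_gt ha)]
  have h2 : (Nat.factorial l : ℝ) ≠ 0 := Nat.cast_ne_zero.2 (Nat.factorial_ne_zero l)
  field_simp
  ring
end

section
/- For every natural number l, ∫_0^∞ j_l(x)² dx = π/(2(2l+1)). Equivalently, for the potential V(r) = α/r² the first-order covariant-perturbation phase shift δ_l^{(1)}(k) = −(π/2) ∫_0^∞ r V(r) J_{l+1/2}(kr)² dr = −α k ∫_0^∞ j_l(kr)² dr equals −πα/(2(2l+1)) for every k > 0. -/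
open Real MeasureTheory Filter Set intervalIntegral Metric

/-- Spherical Bessel function of the first kind, via Rayleigh's formula. -/
noncomputable def sphJ (l : ℕ) (z : ℝ) : ℝ :=
  (-1) ^ l * z ^ l * (rayleighOp^[l] fun w => Real.sin w / w) z

noncomputable def sphF (l : ℕ) (x : ℝ) : ℝ :=
  ∫ t in (-1:ℝ)..1, (1 - t^2)^l * Real.cos (x*t)

lemma sphF_bound (l : ℕ) (x : ℝ) : |sphF l x| ≤ 2 := by
  have h : ∀ t ∈ Set.uIoc (-1:ℝ) 1, |(1 - t^2)^l * Real.cos (x*t)| ≤ 1 := by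
    intro t ht
    rw [Set.uIoc_of_le (by norm_num : (-1:ℝ) ≤ 1)] at ht
    have h1 : |1 - t^2| ≤ 1 := by
      rw [abs_le]
      constructor <;> nlinarith [ht.1, ht.2, sq_nonneg t]
    calc |(1 - t^2)^l * Real.cos (x*t)| = |1-t^2|^l * |Real.cos (x*t)| := by
          rw [abs_mul, abs_pow]
      _ ≤ 1^l * 1 := by
          exact mul_le_mul (pow_le_pow_left₀ (abs_nonneg _) h1 l) (Real.abs_cos_le_one _)
            (abs_nonneg _) (by positivity)
      _ = 1 := by simp
  have := intervalIntegral.norm_integral_le_of_norm_le_const (C := 1)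
    (f := fun t => (1 - t^2)^l * Real.cos (x*t)) (a := (-1:ℝ)) (b := 1)
    (fun t ht => by rw [Real.norm_eq_abs]; exact h t ht)
  simpa [sphF] using this.trans (by norm_num)

lemma abs_aux {t : ℝ} (ht : t ∈ Set.uIoc (-1:ℝ) 1) (l : ℕ) (c : ℝ) (hc : |c| ≤ 1) :
    |(1 - t^2)^l * c| ≤ 1 := by
  rw [Set.uIoc_of_le (by norm_num : (-1:ℝ) ≤ 1)] at ht
  have h1 : |1 - t^2| ≤ 1 := by
    rw [abs_le]; constructor <;> nlinarith [ht.1, ht.2, sq_nonneg t]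
  calc |(1 - t^2)^l * c| = |1-t^2|^l * |c| := by rw [abs_mul, abs_pow]
    _ ≤ 1^l * 1 := mul_le_mul (pow_le_pow_left₀ (abs_nonneg _) h1 l) hc (abs_nonneg _)
        (by positivity)
    _ = 1 := by simp

lemma cont_aux (f : ℝ → ℝ) (hf : Continuous f) (l : ℕ) :
    IntervalIntegrable (fun t : ℝ => (1 - t^2)^l * f t) volume (-1) 1 :=
  (Continuous.mul (by continuity) hf).intervalIntegrable _ _

lemma hasDerivAt_sphF (l : ℕ) (x : ℝ) :
    HasDerivAt (sphF l) (∫ t in (-1:ℝ)..1, (1-t^2)^l * (-(t * Real.sin (x*t)))) x := by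
  have key := intervalIntegral.hasDerivAt_integral_of_dominated_loc_of_deriv_le
    (F := fun x t => (1 - t^2)^l * Real.cos (x*t))
    (F' := fun x t => (1 - t^2)^l * (-(t * Real.sin (x*t))))
    (x₀ := x) (a := (-1:ℝ)) (b := 1) (bound := fun _ => 1) (μ := volume)
    (s := Metric.ball x 1) (Metric.ball_mem_nhds x one_pos)
    (Filter.Eventually.of_forall fun y =>
      ((Continuous.mul (by continuity) (by continuity)).aestronglyMeasurable))
    (cont_aux _ (by continuity) l)
    ((Continuous.mul (by continuity) (by continuity)).aestronglyMeasurable)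
    (Filter.Eventually.of_forall fun t ht y _ => by
      rw [Real.norm_eq_abs]
      exact abs_aux ht l _ (by
        rw [abs_neg, abs_mul]
        rw [Set.uIoc_of_le (by norm_num : (-1:ℝ) ≤ 1)] at ht
        have h2 : |t| ≤ 1 := abs_le.2 ⟨ht.1.le, ht.2⟩
        calc |t| * |Real.sin (y*t)| ≤ 1 * 1 :=
          mul_le_mul h2 (Real.abs_sin_le_one _) (abs_nonneg _) one_pos.le
          _ = 1 := by norm_num))
    intervalIntegrable_const
    (Filter.Eventually.of_forall fun t _ y _ => by
      have h : HasDerivAt (fun y : ℝ => Real.cos (y*t)) (-(t * Real.sin (y*t))) y := by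
        have := ((hasDerivAt_id y).mul_const t).cos
        simpa [mul_comm] using this
      simpa [mul_comm] using h.const_mul ((1 - t^2)^l))
  exact key.2

lemma hasDerivAt_sphF' (l : ℕ) (x : ℝ) :
    HasDerivAt (fun y => ∫ t in (-1:ℝ)..1, (1-t^2)^l * (-(t * Real.sin (y*t))))
      (∫ t in (-1:ℝ)..1, (1-t^2)^l * (-(t^2 * Real.cos (x*t)))) x := by
  have key := intervalIntegral.hasDerivAt_integral_of_dominated_loc_of_deriv_le
    (F := fun x t => (1 - t^2)^l * (-(t * Real.sin (x*t))))
    (F' := fun x t => (1 - t^2)^l * (-(t^2 * Real.cos (x*t))))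
    (x₀ := x) (a := (-1:ℝ)) (b := 1) (bound := fun _ => 1) (μ := volume)
    (s := Metric.ball x 1) (Metric.ball_mem_nhds x one_pos)
    (Filter.Eventually.of_forall fun y =>
      ((Continuous.mul (by continuity) (by continuity)).aestronglyMeasurable))
    (cont_aux _ (by continuity) l)
    ((Continuous.mul (by continuity) (by continuity)).aestronglyMeasurable)
    (Filter.Eventually.of_forall fun t ht y _ => by
      rw [Real.norm_eq_abs]
      exact abs_aux ht l _ (by
        rw [abs_neg, abs_mul]
        rw [Set.uIoc_of_le (by norm_num : (-1:ℝ) ≤ 1)] at ht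
        have h2 : |t^2| ≤ 1 := by
          rw [abs_le]; constructor <;> nlinarith [ht.1, ht.2]
        calc |t^2| * |Real.cos (y*t)| ≤ 1 * 1 :=
          mul_le_mul h2 (Real.abs_cos_le_one _) (abs_nonneg _) one_pos.le
          _ = 1 := by norm_num))
    intervalIntegrable_const
    (Filter.Eventually.of_forall fun t _ y _ => by
      have h : HasDerivAt (fun y : ℝ => Real.sin (y*t)) (t * Real.cos (y*t)) y := by
        have := ((hasDerivAt_id y).mul_const t).sin
        simpa [mul_comm] using this
      have h2 := (h.const_mul t).neg.const_mul ((1 - t^2)^l)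
      refine h2.congr_deriv ?_
      ring)
  exact key.2

lemma sphF_ibp (l : ℕ) (x : ℝ) :
    (∫ t in (-1:ℝ)..1, (1-t^2)^l * (-(t * Real.sin (x*t)))) =
      -(x / (2*(l+1))) * sphF (l+1) x := by
  have hu : ∀ t ∈ Set.uIcc (-1:ℝ) 1, HasDerivAt (fun t => Real.sin (x*t))
      (x * Real.cos (x*t)) t := fun t _ => by
    simpa [mul_comm] using ((hasDerivAt_id t).const_mul x).sin
  have hv : ∀ t ∈ Set.uIcc (-1:ℝ) 1, HasDerivAt (fun t : ℝ => (1-t^2)^(l+1) / (2*(l+1)))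
      (-(t * (1-t^2)^l)) t := fun t _ => by
    have h1 : HasDerivAt (fun t : ℝ => 1 - t^2) (-(2*t)) t := by
      simpa using (hasDerivAt_pow 2 t).const_sub 1
    have h2 := (h1.pow (l+1)).div_const (2*(l+1))
    refine h2.congr_deriv ?_
    rw [Nat.add_sub_cancel]
    push_cast
    field_simp
  have key := intervalIntegral.integral_mul_deriv_eq_deriv_mul hu hv
    ((Continuous.mul continuous_const (by continuity)).intervalIntegrable _ _)
    ((Continuous.neg (Continuous.mul continuous_id (by continuity))).intervalIntegrable _ _)
  have e1 : (∫ t in (-1:ℝ)..1, Real.sin (x*t) * -(t * (1-t^2)^l)) =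
      ∫ t in (-1:ℝ)..1, (1-t^2)^l * (-(t * Real.sin (x*t))) := by
    apply intervalIntegral.integral_congr
    intro t _; ring
  have e2 : (∫ t in (-1:ℝ)..1, x * Real.cos (x*t) * ((1-t^2)^(l+1) / (2*(l+1)))) =
      (x / (2*(l+1))) * sphF (l+1) x := by
    rw [sphF, ← intervalIntegral.integral_const_mul]
    apply intervalIntegral.integral_congr
    intro t _
    field_simp
  rw [e1, e2] at key
  rw [key]
  norm_num

lemma hasDerivAt_sphF_eq (l : ℕ) (x : ℝ) :
    HasDerivAt (sphF l) (-(x / (2*(l+1))) * sphF (l+1) x) x := by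
  have h := hasDerivAt_sphF l x
  rwa [sphF_ibp] at h

lemma sphF_second (l : ℕ) (x : ℝ) :
    (∫ t in (-1:ℝ)..1, (1-t^2)^l * (-(t^2 * Real.cos (x*t)))) =
      sphF (l+1) x - sphF l x := by
  rw [sphF, sphF, ← intervalIntegral.integral_sub (cont_aux _ (by continuity) (l+1))
    (cont_aux _ (by continuity) l)]
  apply intervalIntegral.integral_congr
  intro t _
  ring

lemma sphF_three_term (l : ℕ) (x : ℝ) :
    x^2 * sphF (l+2) x = 2*(l+2)*(2*l+3) * sphF (l+1) x - 4*(l+1)*(l+2) * sphF l x := by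
  have h1 : HasDerivAt (fun y => ∫ t in (-1:ℝ)..1, (1-t^2)^l * (-(t * Real.sin (y*t))))
      (sphF (l+1) x - sphF l x) x := by
    have := hasDerivAt_sphF' l x
    rwa [sphF_second] at this
  have h2 : HasDerivAt (fun y => -(y/(2*(l+1))) * sphF (l+1) y)
      (-(1/(2*(l+1))) * sphF (l+1) x +
        -(x/(2*(l+1))) * (-(x / (2*(l+2))) * sphF (l+2) x)) x := by
    have ha : HasDerivAt (fun y : ℝ => -(y/(2*(l+1)))) (-(1/(2*(l+1)))) x := by
      exact ((hasDerivAt_id x).div_const (2*(l+1))).neg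
    have hb := hasDerivAt_sphF_eq (l+1) x
    have := ha.mul hb
    refine this.congr_deriv ?_; push_cast; ring
  have h3 : (fun y => ∫ t in (-1:ℝ)..1, (1-t^2)^l * (-(t * Real.sin (y*t)))) =
      (fun y => -(y/(2*(l+1))) * sphF (l+1) y) := funext fun y => sphF_ibp l y
  rw [h3] at h1
  have := h1.unique h2
  have hl1 : ((l:ℝ)+1) ≠ 0 := by positivity
  have hl2 : ((l:ℝ)+2) ≠ 0 := by positivity
  field_simp at this
  push_cast
  nlinarith [this]

lemma sphF_zero (x : ℝ) (hx : x ≠ 0) : sphF 0 x = 2 * Real.sin x / x := by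
  have h : ∀ t ∈ Set.uIcc (-1:ℝ) 1, HasDerivAt (fun t => Real.sin (x*t) / x)
      (Real.cos (x*t)) t := fun t _ => by
    have := (((hasDerivAt_id t).const_mul x).sin).div_const x
    refine this.congr_deriv ?_
    field_simp
    rfl
  have key := intervalIntegral.integral_eq_sub_of_hasDerivAt h
    ((by continuity : Continuous fun t : ℝ => Real.cos (x*t)).intervalIntegrable _ _)
  have : sphF 0 x = ∫ t in (-1:ℝ)..1, Real.cos (x*t) := by
    rw [sphF]; apply intervalIntegral.integral_congr; intro t _; ring
  rw [this, key]
  simp [Real.sin_neg]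
  try ring

lemma rayleigh_rep (l : ℕ) (x : ℝ) (hx : x ≠ 0) :
    (rayleighOp^[l] (fun w => Real.sin w / w)) x
      = (-1)^l / (2^(l+1) * Nat.factorial l) * sphF l x := by
  induction l generalizing x with
  | zero =>
    simp only [Function.iterate_zero, id_eq, sphF_zero x hx]
    field_simp
    simp
  | succ l ih =>
    rw [Function.iterate_succ_apply', rayleighOp]
    have hev : (rayleighOp^[l] fun w => Real.sin w / w)
        =ᶠ[nhds x] (fun y => (-1)^l / (2^(l+1) * Nat.factorial l) * sphF l y) := by
      filter_upwards [isOpen_compl_singleton.mem_nhds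
        (by simpa [Set.mem_compl_iff] using hx : x ∈ ({(0:ℝ)}ᶜ : Set ℝ))] with y hy
      exact ih y (by simpa using hy)
    rw [hev.deriv_eq]
    have hd := (hasDerivAt_sphF_eq l x).const_mul ((-1:ℝ)^l / (2^(l+1) * Nat.factorial l))
    rw [hd.deriv]
    rw [Nat.factorial_succ]
    push_cast
    have hl : ((l:ℝ)+1) ≠ 0 := by positivity
    field_simp
    ring

lemma sphJ_rep (l : ℕ) (x : ℝ) (hx : x ≠ 0) :
    sphJ l x = x^l / (2^(l+1) * Nat.factorial l) * sphF l x := by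
  rw [sphJ, rayleigh_rep l x hx]
  have h1 : ((-1:ℝ))^l * ((-1:ℝ))^l = 1 := by
    rw [← pow_add, ← two_mul, pow_mul]; norm_num
  calc ((-1:ℝ))^l * x^l * ((-1)^l / (2^(l+1) * Nat.factorial l) * sphF l x)
      = ((-1:ℝ))^l * ((-1:ℝ))^l * (x^l / (2^(l+1) * Nat.factorial l) * sphF l x) := by ring
    _ = x^l / (2^(l+1) * Nat.factorial l) * sphF l x := by rw [h1]; ring

lemma fact_ne (l : ℕ) : ((Nat.factorial l : ℝ)) ≠ 0 :=
  Nat.cast_ne_zero.2 (Nat.factorial_pos l).ne'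

lemma hasDerivAt_sphJ (l : ℕ) (x : ℝ) (hx : x ≠ 0) :
    HasDerivAt (sphJ l) ((l/x) * sphJ l x - sphJ (l+1) x) x := by
  have hK : HasDerivAt (fun y : ℝ => y^l / (2^(l+1) * Nat.factorial l) * sphF l y)
      ((l * x^(l-1)) / (2^(l+1) * Nat.factorial l) * sphF l x +
        x^l / (2^(l+1) * Nat.factorial l) * (-(x / (2*(l+1))) * sphF (l+1) x)) x := by
    exact ((hasDerivAt_pow l x).div_const _).mul (hasDerivAt_sphF_eq l x)
  have hev : sphJ l =ᶠ[nhds x] (fun y => y^l / (2^(l+1) * Nat.factorial l) * sphF l y) := by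
    filter_upwards [isOpen_compl_singleton.mem_nhds
      (by simpa [Set.mem_compl_iff] using hx : x ∈ ({(0:ℝ)}ᶜ : Set ℝ))] with y hy
    exact sphJ_rep l y (by simpa using hy)
  rw [show (l/x) * sphJ l x - sphJ (l+1) x =
      ((l * x^(l-1)) / (2^(l+1) * Nat.factorial l) * sphF l x +
        x^l / (2^(l+1) * Nat.factorial l) * (-(x / (2*(l+1))) * sphF (l+1) x)) from ?_]
  · exact hK.congr_of_eventuallyEq hev
  · rw [sphJ_rep l x hx, sphJ_rep (l+1) x hx]
    have hpow : (l:ℝ) * x^(l-1) = (l:ℝ) * x^l / x := by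
      cases l with
      | zero => simp
      | succ n =>
        have : x^(n+1-1) = x^(n+1)/x := by
          rw [pow_succ]; field_simp; simp
        rw [this]; ring
    rw [hpow, Nat.factorial_succ]
    have hl : ((l:ℝ)+1) ≠ 0 := by positivity
    push_cast
    field_simp
    ring

lemma sphJ_three_term (l : ℕ) (x : ℝ) (hx : x ≠ 0) :
    sphJ (l+2) x = (2*(l:ℝ)+3)/x * sphJ (l+1) x - sphJ l x := by
  rw [sphJ_rep _ _ hx, sphJ_rep _ _ hx, sphJ_rep _ _ hx]
  have h3 := sphF_three_term l x
  have hl1 : ((l:ℝ)+1) ≠ 0 := by positivity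
  have hl2 : ((l:ℝ)+2) ≠ 0 := by positivity
  have hx2 : x^(l+2) = x^l * x^2 := by ring
  rw [hx2]
  rw [show x^l * x^2 / (2^(l+2+1) * Nat.factorial (l+2)) * sphF (l+2) x
      = x^l / (2^(l+2+1) * Nat.factorial (l+2)) * (x^2 * sphF (l+2) x) from by ring, h3]
  rw [Nat.factorial_succ, Nat.factorial_succ]
  push_cast
  field_simp
  ring

lemma sphJ_zero (x : ℝ) : sphJ 0 x = Real.sin x / x := by
  simp [sphJ]

lemma sphJ_one (x : ℝ) (hx : x ≠ 0) : sphJ 1 x = (Real.sin x - x * Real.cos x) / x^2 := by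
  have hd : HasDerivAt (fun w : ℝ => Real.sin w / w) ((Real.cos x * x - Real.sin x * 1)/x^2) x := by
    exact (Real.hasDerivAt_sin x).div (hasDerivAt_id x) hx
  rw [sphJ]
  simp only [Function.iterate_one, rayleighOp, pow_one]
  rw [hd.deriv]
  field_simp
  ring

lemma sphJ_bound_small (l : ℕ) (x : ℝ) (h0 : 0 < x) (h1 : x ≤ 1) : |sphJ l x| ≤ 1 := by
  rw [sphJ_rep l x h0.ne', abs_mul]
  have hfact : (1:ℝ) ≤ Nat.factorial l := by exact_mod_cast Nat.one_le_iff_ne_zero.2 (Nat.factorial_pos l).ne'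
  have h2e : (2:ℝ) ≤ 2^(l+1) := by
    calc (2:ℝ) = 2^1 := by norm_num
    _ ≤ 2^(l+1) := pow_le_pow_right₀ (by norm_num) (by omega)
  have hden : (2:ℝ) ≤ 2^(l+1) * Nat.factorial l := by nlinarith
  have h2 : |x^l / (2^(l+1) * (Nat.factorial l : ℝ))| ≤ 1/2 := by
    rw [abs_div]
    have hxl : |x^l| ≤ 1 := by
      rw [abs_pow]
      exact pow_le_one₀ (abs_nonneg _) (by rwa [abs_of_pos h0])
    rw [abs_of_pos (by positivity : (0:ℝ) < 2^(l+1) * Nat.factorial l)]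
    rw [div_le_div_iff₀ (by positivity) (by norm_num)]
    nlinarith
  calc |x ^ l / (2 ^ (l + 1) * (Nat.factorial l : ℝ))| * |sphF l x| ≤ (1/2) * 2 :=
      mul_le_mul h2 (sphF_bound l x) (abs_nonneg _) (by norm_num)
    _ = 1 := by norm_num

lemma sphJ_decay (l : ℕ) : ∃ C : ℝ, 0 ≤ C ∧ ∀ x : ℝ, 1 ≤ x →
    |sphJ l x| ≤ C / x := by
  suffices H : ∀ l : ℕ, (∃ C : ℝ, 0 ≤ C ∧ ∀ x : ℝ, 1 ≤ x → |sphJ l x| ≤ C / x) ∧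
      (∃ C : ℝ, 0 ≤ C ∧ ∀ x : ℝ, 1 ≤ x → |sphJ (l+1) x| ≤ C / x) from (H l).1
  intro l
  induction l with
  | zero =>
    refine ⟨⟨1, zero_le_one, fun x hx => ?_⟩, ⟨2, by norm_num, fun x hx => ?_⟩⟩
    · have hx0 : (0:ℝ) < x := by linarith
      rw [sphJ_zero, abs_div, abs_of_pos hx0]
      gcongr
      exact Real.abs_sin_le_one x
    · have hx0 : (0:ℝ) < x := by linarith
      rw [sphJ_one x hx0.ne', abs_div, abs_of_pos (by positivity : (0:ℝ) < x^2)]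
      have hb : |Real.sin x - x * Real.cos x| ≤ 2 * x := by
        have b1 : |Real.sin x| ≤ 1 := Real.abs_sin_le_one x
        have b2 : |x * Real.cos x| ≤ x := by
          rw [abs_mul, abs_of_pos hx0]
          nlinarith [Real.abs_cos_le_one x, abs_nonneg (Real.cos x)]
        calc |Real.sin x - x * Real.cos x| ≤ |Real.sin x| + |x * Real.cos x| := abs_sub _ _
          _ ≤ 1 + x := by linarith
          _ ≤ 2 * x := by linarith
      calc |Real.sin x - x * Real.cos x| / x^2 ≤ (2*x) / x^2 := by gcongr
        _ = 2 / x := by field_simp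
  | succ l ih =>
    obtain ⟨⟨C1, hC1, h1⟩, ⟨C2, hC2, h2⟩⟩ := ih
    refine ⟨⟨C2, hC2, h2⟩, ⟨(2*(l:ℝ)+3)*C2 + C1, by positivity, fun x hx => ?_⟩⟩
    have hx0 : (0:ℝ) < x := by linarith
    rw [show l+1+1 = l+2 from rfl, sphJ_three_term l x hx0.ne']
    have e1 : |(2*(l:ℝ)+3)/x * sphJ (l+1) x| ≤ (2*(l:ℝ)+3)/x * (C2/x) := by
      rw [abs_mul, abs_div, abs_of_pos hx0, abs_of_pos (by positivity : (0:ℝ) < 2*(l:ℝ)+3)]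
      gcongr
      exact h2 x hx
    have e2 : (2*(l:ℝ)+3)/x * (C2/x) ≤ (2*(l:ℝ)+3)*C2/x := by
      rw [div_mul_div_comm]
      apply div_le_div_of_nonneg_left ?_ hx0 ?_ |>.trans ?_
      · positivity
      · nlinarith
      · apply div_le_div_of_nonneg_left (by positivity) hx0
        nlinarith
    calc |(2*(l:ℝ)+3)/x * sphJ (l+1) x - sphJ l x|
        ≤ |(2*(l:ℝ)+3)/x * sphJ (l+1) x| + |sphJ l x| := abs_sub _ _
      _ ≤ (2*(l:ℝ)+3)*C2/x + C1/x := by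
          have := h1 x hx
          linarith [e1.trans e2]
      _ = ((2*(l:ℝ)+3)*C2 + C1)/x := by rw [← add_div]

lemma sphJ_contAt (l : ℕ) {x : ℝ} (hx : x ≠ 0) : ContinuousAt (sphJ l) x :=
  (hasDerivAt_sphJ l x hx).continuousAt

lemma sphJ_sq_integrable (l : ℕ) :
    IntegrableOn (fun x => (sphJ l x)^2) (Set.Ioi (0:ℝ)) := by
  have hmeas : ∀ s : Set ℝ, MeasurableSet s → s ⊆ {(0:ℝ)}ᶜ →
      AEStronglyMeasurable (fun x => (sphJ l x)^2) (volume.restrict s) := by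
    intro s hs hsub
    apply ContinuousOn.aestronglyMeasurable ?_ hs
    intro x hxs
    exact ((sphJ_contAt l (hsub hxs)).continuousWithinAt.pow 2)
  have h1 : IntegrableOn (fun x => (sphJ l x)^2) (Set.Ioc (0:ℝ) 1) := by
    refine Integrable.mono' (integrable_const 1) (hmeas _ measurableSet_Ioc ?_) ?_
    · intro x hxs; simpa using (hxs.1).ne'
    · rw [ae_restrict_iff' measurableSet_Ioc]
      filter_upwards with x hx
      rw [Real.norm_eq_abs, abs_pow]
      calc |sphJ l x|^2 ≤ 1^2 :=
            pow_le_pow_left₀ (abs_nonneg _) (sphJ_bound_small l x hx.1 hx.2) 2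
        _ = 1 := one_pow 2
  have h2 : IntegrableOn (fun x => (sphJ l x)^2) (Set.Ioi (1:ℝ)) := by
    obtain ⟨C, hC, hCb⟩ := sphJ_decay l
    refine Integrable.mono' (g := fun x => C^2 * x^(-2:ℝ))
      ((integrableOn_Ioi_rpow_of_lt (by norm_num) one_pos).const_mul _)
      (hmeas _ measurableSet_Ioi ?_) ?_
    · intro x hxs
      simp only [Set.mem_Ioi] at hxs
      simp only [Set.mem_compl_iff, Set.mem_singleton_iff]
      linarith
    · rw [ae_restrict_iff' measurableSet_Ioi]
      filter_upwards with x hx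
      simp only [Set.mem_Ioi] at hx
      have hx0 : (0:ℝ) < x := by linarith
      rw [Real.norm_eq_abs, abs_pow]
      have : x ^ (-2:ℝ) = (x^2)⁻¹ := by
        rw [show (-2:ℝ) = -(2:ℕ) by norm_num, Real.rpow_neg hx0.le, Real.rpow_natCast]
      rw [this]
      calc |sphJ l x|^2 ≤ (C/x)^2 :=
            pow_le_pow_left₀ (abs_nonneg _) (hCb x hx.le) 2
        _ = C^2 * (x^2)⁻¹ := by field_simp
  have := h1.union h2
  rwa [Set.Ioc_union_Ioi_eq_Ioi (zero_le_one)] at this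

lemma energy_identity (l : ℕ) :
    (∫ x in Set.Ioi (0:ℝ), ((2*(l:ℝ)+1) * (sphJ l x)^2 - (2*(l:ℝ)+3) * (sphJ (l+1) x)^2)) = 0 := by
  set W : ℝ → ℝ := fun x => x * ((sphJ l x)^2 + (sphJ (l+1) x)^2) with hW
  have hW0 : W 0 = 0 := by simp [hW]
  have hderiv : ∀ x ∈ Set.Ioi (0:ℝ), HasDerivAt W
      ((2*(l:ℝ)+1) * (sphJ l x)^2 - (2*(l:ℝ)+3) * (sphJ (l+1) x)^2) x := by
    intro x hx
    simp only [Set.mem_Ioi] at hx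
    have hu := hasDerivAt_sphJ l x hx.ne'
    have hv := hasDerivAt_sphJ (l+1) x hx.ne'
    have h3 := sphJ_three_term l x hx.ne'
    have hsum : HasDerivAt (fun y => (sphJ l y)^2 + (sphJ (l+1) y)^2)
        (2 * sphJ l x ^ (2-1) * ((l/x) * sphJ l x - sphJ (l+1) x)
          + 2 * sphJ (l+1) x ^ (2-1) * (((l:ℝ)+1)/x * sphJ (l+1) x - sphJ (l+1+1) x)) x := by
      have h1 := hu.pow 2
      have h2 := hv.pow 2
      refine (h1.add h2).congr_deriv ?_
      push_cast
      ring
    have hmul := (hasDerivAt_id x).mul hsum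
    refine hmul.congr_deriv ?_
    simp only [pow_one, id_eq, one_mul]
    rw [show l+1+1 = l+2 from rfl, h3]
    push_cast
    field_simp
    ring
  have hcont : ContinuousWithinAt W (Set.Ici (0:ℝ)) 0 := by
    rw [ContinuousWithinAt, hW0]
    apply squeeze_zero_norm' (a := fun x => 2*x)
    · have hmem : Set.Ici (0:ℝ) ∩ Set.Iic 1 ∈ nhdsWithin (0:ℝ) (Set.Ici 0) :=
        Filter.inter_mem self_mem_nhdsWithin
          (nhdsWithin_le_nhds (Iic_mem_nhds one_pos))
      filter_upwards [hmem] with x hx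
      rcases eq_or_lt_of_le (Set.mem_Ici.1 hx.1) with h | h
      · simp [hW, ← h]
      · have b1 := sphJ_bound_small l x h hx.2
        have b2 := sphJ_bound_small (l+1) x h hx.2
        rw [Real.norm_eq_abs, hW, abs_mul, abs_of_pos h]
        have : |(sphJ l x)^2 + (sphJ (l+1) x)^2| ≤ 2 := by
          rw [abs_of_nonneg (by positivity)]
          nlinarith [abs_nonneg (sphJ l x), abs_nonneg (sphJ (l+1) x), sq_abs (sphJ l x),
            sq_abs (sphJ (l+1) x)]
        nlinarith [abs_nonneg ((sphJ l x)^2 + (sphJ (l+1) x)^2)]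
    · have : Filter.Tendsto (fun x : ℝ => 2*x) (nhds 0) (nhds 0) := by
        simpa using (continuous_mul_left (2:ℝ)).tendsto (0:ℝ)
      exact this.mono_left nhdsWithin_le_nhds
  have f'int : IntegrableOn (fun x =>
      (2*(l:ℝ)+1) * (sphJ l x)^2 - (2*(l:ℝ)+3) * (sphJ (l+1) x)^2) (Set.Ioi (0:ℝ)) :=
    ((sphJ_sq_integrable l).const_mul _).sub ((sphJ_sq_integrable (l+1)).const_mul _)
  have htop : Filter.Tendsto W Filter.atTop (nhds 0) := by
    obtain ⟨C1, hC1, h1⟩ := sphJ_decay l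
    obtain ⟨C2, hC2, h2⟩ := sphJ_decay (l+1)
    apply squeeze_zero_norm' (a := fun x => (C1^2 + C2^2) * x⁻¹)
    · filter_upwards [Filter.eventually_ge_atTop (1:ℝ)] with x hx
      have hx0 : (0:ℝ) < x := by linarith
      have b1 : (sphJ l x)^2 ≤ C1^2/x^2 := by
        have := pow_le_pow_left₀ (abs_nonneg _) (h1 x hx) 2
        rw [sq_abs] at this
        calc (sphJ l x)^2 ≤ (C1/x)^2 := this
          _ = C1^2/x^2 := by rw [div_pow]
      have b2 : (sphJ (l+1) x)^2 ≤ C2^2/x^2 := by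
        have := pow_le_pow_left₀ (abs_nonneg _) (h2 x hx) 2
        rw [sq_abs] at this
        calc (sphJ (l+1) x)^2 ≤ (C2/x)^2 := this
          _ = C2^2/x^2 := by rw [div_pow]
      rw [Real.norm_eq_abs, hW, abs_mul, abs_of_pos hx0]
      have hb : |(sphJ l x)^2 + (sphJ (l+1) x)^2| ≤ (C1^2 + C2^2)/x^2 := by
        rw [abs_of_nonneg (by positivity)]
        calc (sphJ l x)^2 + (sphJ (l+1) x)^2 ≤ C1^2/x^2 + C2^2/x^2 := by linarith
          _ = (C1^2 + C2^2)/x^2 := by rw [← add_div]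
      calc x * |(sphJ l x)^2 + (sphJ (l+1) x)^2| ≤ x * ((C1^2 + C2^2)/x^2) := by
            exact mul_le_mul_of_nonneg_left hb hx0.le
        _ = (C1^2 + C2^2) * x⁻¹ := by field_simp
    · have := Filter.Tendsto.const_mul (C1^2 + C2^2) tendsto_inv_atTop_zero
      simpa using this
  have key := MeasureTheory.integral_Ioi_of_hasDerivAt_of_tendsto hcont hderiv f'int htop
  rw [key, hW0, sub_zero]

lemma exp_deriv_aux (c : ℝ) (x : ℝ) :
    HasDerivAt (fun y : ℝ => Real.exp (-(y*c))) (Real.exp (-(x*c)) * (-c)) x := by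
  have h : HasDerivAt (fun y : ℝ => y*c) c x := by
    simpa using (hasDerivAt_id x).mul_const c
  exact h.neg.exp

lemma tendsto_exp_neg_mul (c : ℝ) (hc : 0 < c) :
    Filter.Tendsto (fun y : ℝ => Real.exp (-(y*c))) Filter.atTop (nhds 0) := by
  have h1 : Filter.Tendsto (fun y : ℝ => y * c) Filter.atTop Filter.atTop :=
    Filter.Tendsto.atTop_mul_const hc Filter.tendsto_id
  have h2 : Filter.Tendsto (fun z : ℝ => Real.exp (-z)) Filter.atTop (nhds 0) :=
    Real.tendsto_exp_neg_atTop_nhds_zero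
  exact h2.comp h1

lemma tendsto_mul_exp_neg_mul (c : ℝ) (hc : 0 < c) :
    Filter.Tendsto (fun y : ℝ => y * Real.exp (-(y*c))) Filter.atTop (nhds 0) := by
  have h1 : Filter.Tendsto (fun y : ℝ => y * c) Filter.atTop Filter.atTop :=
    Filter.Tendsto.atTop_mul_const hc Filter.tendsto_id
  have h2 := (Real.tendsto_pow_mul_exp_neg_atTop_nhds_zero 1).comp h1
  have h2' : Filter.Tendsto (fun y : ℝ => c * (y * Real.exp (-(y*c))))
      Filter.atTop (nhds 0) := by
    apply h2.congr
    intro y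
    simp [Function.comp]
    ring
  have := h2'.const_mul c⁻¹
  simp only [mul_zero] at this
  apply this.congr
  intro y
  field_simp

lemma integralA (x : ℝ) (hx : 0 < x) :
    (∫ t in Set.Ioi (0:ℝ), t * Real.exp (-(x*t))) = 1/x^2 := by
  have hderiv : ∀ t ∈ Set.Ici (0:ℝ), HasDerivAt
      (fun t : ℝ => -(t/x + 1/x^2) * Real.exp (-(t*x)))
      (t * Real.exp (-(x*t))) t := by
    intro t _
    have h1 : HasDerivAt (fun t : ℝ => -(t/x + 1/x^2)) (-(1/x)) t := by
      have h0 : HasDerivAt (fun t : ℝ => t/x + 1/x^2) (1/x) t :=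
        ((hasDerivAt_id t).div_const x).add_const (1/x^2)
      exact h0.neg
    have h2 := exp_deriv_aux x t
    have := h1.mul h2
    refine this.congr_deriv ?_
    rw [mul_comm x t]
    field_simp
    ring
  have htop : Filter.Tendsto (fun t : ℝ => -(t/x + 1/x^2) * Real.exp (-(t*x)))
      Filter.atTop (nhds 0) := by
    have e1 := (tendsto_mul_exp_neg_mul x hx).const_mul (-(1/x))
    have e2 := (tendsto_exp_neg_mul x hx).const_mul (-(1/x^2))
    have := e1.add e2
    simp only [mul_zero, add_zero] at this
    apply this.congr'
    filter_upwards with t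
    ring
  have key := MeasureTheory.integral_Ioi_of_hasDerivAt_of_nonneg'
    hderiv (fun t ht => by
      have : (0:ℝ) < t := ht
      positivity) htop
  rw [key]
  simp

lemma integrableA (x : ℝ) (hx : 0 < x) :
    IntegrableOn (fun t => t * Real.exp (-(x*t))) (Set.Ioi (0:ℝ)) := by
  have h := integralA x hx
  -- reconstruct via nonneg lemma
  have hderiv : ∀ t ∈ Set.Ici (0:ℝ), HasDerivAt
      (fun t : ℝ => -(t/x + 1/x^2) * Real.exp (-(t*x)))
      (t * Real.exp (-(x*t))) t := by
    intro t _
    have h1 : HasDerivAt (fun t : ℝ => -(t/x + 1/x^2)) (-(1/x)) t := by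
      have h0 : HasDerivAt (fun t : ℝ => t/x + 1/x^2) (1/x) t :=
        ((hasDerivAt_id t).div_const x).add_const (1/x^2)
      exact h0.neg
    have h2 := exp_deriv_aux x t
    have := h1.mul h2
    refine this.congr_deriv ?_
    rw [mul_comm x t]
    field_simp
    ring
  have htop : Filter.Tendsto (fun t : ℝ => -(t/x + 1/x^2) * Real.exp (-(t*x)))
      Filter.atTop (nhds 0) := by
    have e1 := (tendsto_mul_exp_neg_mul x hx).const_mul (-(1/x))
    have e2 := (tendsto_exp_neg_mul x hx).const_mul (-(1/x^2))
    have := e1.add e2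
    simp only [mul_zero, add_zero] at this
    apply this.congr'
    filter_upwards with t
    ring
  exact MeasureTheory.integrableOn_Ioi_deriv_of_nonneg' hderiv
    (fun t ht => by
      have : (0:ℝ) < t := ht
      positivity) htop

lemma sinsq_deriv_aux (t : ℝ) (ht : 0 < t) (x : ℝ) :
    HasDerivAt (fun y : ℝ => t * (Real.exp (-(y*t)) *
        (-1/(2*t) + t/(2*(t^2+4)) * Real.cos (2*y) + -1/(t^2+4) * Real.sin (2*y))))
      (Real.sin x^2 * (t * Real.exp (-(x*t)))) x := by
  have hexp := exp_deriv_aux t x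
  have h2 : HasDerivAt (fun y : ℝ => 2*y) 2 x := by
    simpa using (hasDerivAt_id x).const_mul 2
  have hcos := h2.cos
  have hsin := h2.sin
  have htrig : HasDerivAt (fun y : ℝ =>
      -1/(2*t) + t/(2*(t^2+4)) * Real.cos (2*y) + -1/(t^2+4) * Real.sin (2*y))
      (t/(2*(t^2+4)) * (-Real.sin (2*x) * 2) + -1/(t^2+4) * (Real.cos (2*x) * 2)) x :=
    ((hcos.const_mul _).const_add _).add (hsin.const_mul _)
  have hprod := (hexp.mul htrig).const_mul t
  refine hprod.congr_deriv ?_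
  have ht4 : t^2 + 4 ≠ 0 := by positivity
  rw [Real.cos_two_mul, Real.sin_two_mul, Real.sin_sq]
  field_simp
  ring

lemma integralB (t : ℝ) (ht : 0 < t) :
    (∫ x in Set.Ioi (0:ℝ), Real.sin x^2 * (t * Real.exp (-(x*t)))) = 2/(t^2+4) ∧
    IntegrableOn (fun x => Real.sin x^2 * (t * Real.exp (-(x*t)))) (Set.Ioi (0:ℝ)) := by
  set ψ : ℝ → ℝ := fun y => t * (Real.exp (-(y*t)) *
      (-1/(2*t) + t/(2*(t^2+4)) * Real.cos (2*y) + -1/(t^2+4) * Real.sin (2*y))) with hψ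
  have hderiv : ∀ x ∈ Set.Ici (0:ℝ), HasDerivAt ψ
      (Real.sin x^2 * (t * Real.exp (-(x*t)))) x := fun x _ => sinsq_deriv_aux t ht x
  have hpos : ∀ x ∈ Set.Ioi (0:ℝ), 0 ≤ Real.sin x^2 * (t * Real.exp (-(x*t))) := by
    intro x _
    positivity
  have htop : Filter.Tendsto ψ Filter.atTop (nhds 0) := by
    apply squeeze_zero_norm' (a := fun y : ℝ =>
      (t * (1/(2*t) + t/(2*(t^2+4)) + 1/(t^2+4))) * Real.exp (-(y*t)))
    · filter_upwards with y
      rw [hψ, Real.norm_eq_abs, abs_mul, abs_of_pos ht, abs_mul,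
        Real.abs_exp]
      have hb : |(-1/(2*t) + t/(2*(t^2+4)) * Real.cos (2*y) + -1/(t^2+4) * Real.sin (2*y))| ≤
          1/(2*t) + t/(2*(t^2+4)) + 1/(t^2+4) := by
        have c1 : |(-1/(2*t))| = 1/(2*t) := by
          rw [abs_div, abs_neg, abs_one, abs_of_pos (by positivity : (0:ℝ) < 2*t)]
        have c2 : |t/(2*(t^2+4)) * Real.cos (2*y)| ≤ t/(2*(t^2+4)) := by
          rw [abs_mul, abs_div, abs_of_pos ht, abs_of_pos (by positivity : (0:ℝ) < 2*(t^2+4))]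
          nlinarith [Real.abs_cos_le_one (2*y), abs_nonneg (Real.cos (2*y)),
            div_pos ht (by positivity : (0:ℝ) < 2*(t^2+4))]
        have c3 : |(-1/(t^2+4)) * Real.sin (2*y)| ≤ 1/(t^2+4) := by
          rw [abs_mul, abs_div, abs_neg, abs_one, abs_of_pos (by positivity : (0:ℝ) < t^2+4)]
          nlinarith [Real.abs_sin_le_one (2*y), abs_nonneg (Real.sin (2*y)),
            one_div_pos.2 (by positivity : (0:ℝ) < t^2+4)]
        calc |(-1/(2*t) + t/(2*(t^2+4)) * Real.cos (2*y) + -1/(t^2+4) * Real.sin (2*y))|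
            ≤ |(-1/(2*t))| + |t/(2*(t^2+4)) * Real.cos (2*y)| + |(-1/(t^2+4)) * Real.sin (2*y)| := by
              exact (abs_add_three _ _ _)
          _ ≤ 1/(2*t) + t/(2*(t^2+4)) + 1/(t^2+4) := by rw [c1]; linarith
      calc t * (Real.exp (-(y*t)) * |(-1/(2*t) + t/(2*(t^2+4)) * Real.cos (2*y) +
              -1/(t^2+4) * Real.sin (2*y))|)
          ≤ t * (Real.exp (-(y*t)) * (1/(2*t) + t/(2*(t^2+4)) + 1/(t^2+4))) := by
            apply mul_le_mul_of_nonneg_left ?_ ht.le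
            exact mul_le_mul_of_nonneg_left hb (Real.exp_pos _).le
        _ = (t * (1/(2*t) + t/(2*(t^2+4)) + 1/(t^2+4))) * Real.exp (-(y*t)) := by ring
    · have := (tendsto_exp_neg_mul t ht).const_mul
        (t * (1/(2*t) + t/(2*(t^2+4)) + 1/(t^2+4)))
      simpa using this
  have key := MeasureTheory.integral_Ioi_of_hasDerivAt_of_nonneg' hderiv hpos htop
  have hint := MeasureTheory.integrableOn_Ioi_deriv_of_nonneg' hderiv hpos htop
  refine ⟨?_, hint⟩
  rw [key, hψ]
  simp only [mul_zero, neg_zero, Real.exp_zero, Real.cos_zero, Real.sin_zero]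
  have ht4 : t^2 + 4 ≠ 0 := by positivity
  field_simp
  ring_nf
  simp

lemma integralC : (∫ t in Set.Ioi (0:ℝ), 2/(t^2+4)) = π/2 := by
  have hderiv : ∀ t ∈ Set.Ici (0:ℝ), HasDerivAt (fun t : ℝ => Real.arctan (t/2))
      (2/(t^2+4)) t := by
    intro t _
    have h1 : HasDerivAt (fun t : ℝ => t/2) (1/2) t := by
      simpa using (hasDerivAt_id t).div_const 2
    have h2 := (Real.hasDerivAt_arctan (t/2)).comp t h1
    refine h2.congr_deriv ?_
    field_simp
    ring
  have hpos : ∀ t ∈ Set.Ioi (0:ℝ), 0 ≤ 2/(t^2+4) := fun t _ => by positivity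
  have htop : Filter.Tendsto (fun t : ℝ => Real.arctan (t/2)) Filter.atTop (nhds (π/2)) := by
    have h1 : Filter.Tendsto (fun t : ℝ => t/2) Filter.atTop Filter.atTop :=
      Filter.tendsto_id.atTop_div_const two_pos
    exact (tendsto_nhds_of_tendsto_nhdsWithin Real.tendsto_arctan_atTop).comp h1
  have key := MeasureTheory.integral_Ioi_of_hasDerivAt_of_nonneg' hderiv hpos htop
  rw [key]
  simp

lemma integrableC : IntegrableOn (fun t : ℝ => 2/(t^2+4)) (Set.Ioi (0:ℝ)) := by
  refine Integrable.mono' (g := fun t => 2 * (1+t^2)⁻¹)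
    ((integrable_inv_one_add_sq.const_mul 2).integrableOn)
    ((Continuous.aestronglyMeasurable (by
      apply Continuous.div continuous_const (by continuity)
      intro t
      positivity))) ?_
  filter_upwards with t
  rw [Real.norm_eq_abs, abs_of_nonneg (by positivity)]
  rw [div_le_iff₀ (by positivity : (0:ℝ) < t^2+4)]
  have h1 : (0:ℝ) < 1 + t^2 := by positivity
  rw [mul_comm 2 (1+t^2)⁻¹, mul_assoc, inv_mul_eq_div, le_div_iff₀ h1]
  nlinarith

lemma integral_sphJ0 : (∫ x in Set.Ioi (0:ℝ), (sphJ 0 x)^2) = π/2 := by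
  have hmeas : AEStronglyMeasurable
      (Function.uncurry fun x t => Real.sin x^2 * (t * Real.exp (-(x*t))))
      ((volume.restrict (Set.Ioi (0:ℝ))).prod (volume.restrict (Set.Ioi (0:ℝ)))) := by
    apply Continuous.aestronglyMeasurable
    apply Continuous.mul
    · exact (Real.continuous_sin.comp continuous_fst).pow 2
    · exact continuous_snd.mul ((continuous_fst.mul continuous_snd).neg.rexp)
  have hint : Integrable
      (Function.uncurry fun x t => Real.sin x^2 * (t * Real.exp (-(x*t))))
      ((volume.restrict (Set.Ioi (0:ℝ))).prod (volume.restrict (Set.Ioi (0:ℝ)))) := by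
    rw [MeasureTheory.integrable_prod_iff' hmeas]
    constructor
    · filter_upwards [MeasureTheory.ae_restrict_mem measurableSet_Ioi] with t ht
      exact (integralB t ht).2
    · apply integrableC.congr
      filter_upwards [MeasureTheory.ae_restrict_mem measurableSet_Ioi] with t ht
      have h1 : (∫ x in Set.Ioi (0:ℝ),
          ‖Real.sin x^2 * (t * Real.exp (-(x*t)))‖) =
          ∫ x in Set.Ioi (0:ℝ), Real.sin x^2 * (t * Real.exp (-(x*t))) := by
        apply MeasureTheory.integral_congr_ae
        filter_upwards [MeasureTheory.ae_restrict_mem measurableSet_Ioi] with x hx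
        rw [Real.norm_eq_abs, abs_of_nonneg]
        have : (0:ℝ) < t := ht
        positivity
      rw [show (fun x => ‖Function.uncurry (fun x t => Real.sin x^2 * (t * Real.exp (-(x*t)))) (x, t)‖) = fun x => ‖Real.sin x^2 * (t * Real.exp (-(x*t)))‖ from rfl, h1, (integralB t ht).1]
  have hswap := MeasureTheory.integral_integral_swap hint
  have lhs_eq : (∫ x in Set.Ioi (0:ℝ), ∫ t in Set.Ioi (0:ℝ),
      Real.sin x^2 * (t * Real.exp (-(x*t)))) = ∫ x in Set.Ioi (0:ℝ), (sphJ 0 x)^2 := by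
    apply MeasureTheory.setIntegral_congr_fun measurableSet_Ioi
    intro x hx
    have hx0 : (0:ℝ) < x := hx
    simp only []
    rw [MeasureTheory.integral_const_mul, integralA x hx0, sphJ_zero, div_pow]
    field_simp
  have rhs_eq : (∫ t in Set.Ioi (0:ℝ), ∫ x in Set.Ioi (0:ℝ),
      Real.sin x^2 * (t * Real.exp (-(x*t)))) = π/2 := by
    rw [← integralC]
    apply MeasureTheory.setIntegral_congr_fun measurableSet_Ioi
    intro t ht
    exact (integralB t ht).1
  rw [← lhs_eq, hswap, rhs_eq]

lemma integral_sphJ_sq_val (l : ℕ) :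
    (∫ x in Set.Ioi (0 : ℝ), (sphJ l x) ^ 2) = π / (2 * (2 * (l : ℝ) + 1)) := by
  induction l with
  | zero =>
    rw [integral_sphJ0]
    norm_num
  | succ l ih =>
    have he := energy_identity l
    have h1 : (∫ x in Set.Ioi (0:ℝ), (2*(l:ℝ)+1) * (sphJ l x)^2 -
        (2*(l:ℝ)+3) * (sphJ (l+1) x)^2) =
        (2*(l:ℝ)+1) * (∫ x in Set.Ioi (0:ℝ), (sphJ l x)^2) -
        (2*(l:ℝ)+3) * (∫ x in Set.Ioi (0:ℝ), (sphJ (l+1) x)^2) := by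
      rw [MeasureTheory.integral_sub ((sphJ_sq_integrable l).const_mul _)
        ((sphJ_sq_integrable (l+1)).const_mul _),
        MeasureTheory.integral_const_mul, MeasureTheory.integral_const_mul]
    rw [he] at h1
    have h2 : (2*(l:ℝ)+3) * (∫ x in Set.Ioi (0:ℝ), (sphJ (l+1) x)^2) =
        (2*(l:ℝ)+1) * (π / (2*(2*(l:ℝ)+1))) := by
      rw [← ih]; linarith
    have h3 : (2*(l:ℝ)+3) ≠ 0 := by positivity
    have h4 : (2*(l:ℝ)+1) ≠ 0 := by positivity
    have : (∫ x in Set.Ioi (0:ℝ), (sphJ (l+1) x)^2) =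
        (2*(l:ℝ)+1) * (π / (2*(2*(l:ℝ)+1))) / (2*(l:ℝ)+3) := by
      field_simp at h2 ⊢
      linarith
    rw [this]
    push_cast
    field_simp
    ring


/-- `∫_0^∞ j_l(x)² dx = π/(2(2l+1))`; equivalently, for the potential `V(r) = α/r²`,
the first-order covariant-perturbation phase shift
`δ_l^{(1)}(k) = -α k ∫_0^∞ j_l(kr)² dr` equals `-πα/(2(2l+1))` for every `k > 0`. -/
theorem integral_sphJ_sq (l : ℕ) :
    (∫ x in Set.Ioi (0 : ℝ), (sphJ l x) ^ 2) = π / (2 * (2 * (l : ℝ) + 1)) ∧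
      ∀ (α k : ℝ), 0 < k →
        (-α * k * ∫ r in Set.Ioi (0 : ℝ), (sphJ l (k * r)) ^ 2) =
          -(π * α) / (2 * (2 * (l : ℝ) + 1)) := by
  refine ⟨integral_sphJ_sq_val l, fun α k hk => ?_⟩
  have hsub := MeasureTheory.integral_comp_mul_left_Ioi (fun x => (sphJ l x)^2) 0 hk
  rw [mul_zero] at hsub
  rw [hsub, smul_eq_mul, integral_sphJ_sq_val l]
  have h4 : (2*(l:ℝ)+1) ≠ 0 := by positivity
  field_simp
end
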